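/- Fix j ≥ 1 and let μ ≤ 2^{−j}. For 1 ≤ i ≤ j−1, let s_i be the sum of c_i = (6ℓ log n + 6 log log₂ n)·2^i i.i.d. random variables valued in [0,1] with mean μ. Then Pr[s_i/c_i > 2^{−i}] < 1/(n^ℓ · log₂ n). -/

import Mathlib

open MeasureTheory ProbabilityTheory

/-- Lemma 7 of Tang–Xiao–Shi: with `μ ≤ 2^{-j}` and `1 ≤ i ≤ j-1`, if `s_i` is the sum of
`c_i = (6ℓ log n + 6 log log₂ n)·2^i` i.i.d. random variables valued in `[0,1]` with mean `μ`,
then `Pr[s_i/c_i > 2^{-i}] < 1/(n^ℓ · log₂ n)`. -/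
theorem kpt_estimation_early_stop_unlikely
    {Ω : Type*} [MeasureSpace Ω] [IsProbabilityMeasure (ℙ : Measure Ω)]
    (n : ℕ) (hn : 2 ≤ n) (ℓ : ℝ) (hℓ : 0 < ℓ)
    (j i : ℕ) (hj : 1 ≤ j) (hi1 : 1 ≤ i) (hij : i ≤ j - 1)
    (μ : ℝ) (hμ : μ ≤ (2:ℝ) ^ (-(j:ℝ)))
    (c : ℕ) (hc : (c:ℝ) = (6 * ℓ * Real.log n + 6 * Real.log (Real.logb 2 n)) * 2 ^ i)
    (X : Fin c → Ω → ℝ)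
    (hmeas : ∀ a, Measurable (X a))
    (hindep : iIndepFun X ℙ)
    (hident : ∀ a b, IdentDistrib (X a) (X b) ℙ ℙ)
    (hbound : ∀ a ω, X a ω ∈ Set.Icc (0:ℝ) 1)
    (hmean : ∀ a, ∫ ω, X a ω ∂ℙ = μ) :
    (ℙ {ω | (2:ℝ) ^ (-(i:ℝ)) < (∑ a, X a ω) / c}).toReal
      < 1 / ((n:ℝ) ^ ℓ * Real.logb 2 n) := by
  classical
  set t : ℝ := Real.log 2 with ht_def
  have ht23 : (2:ℝ)/3 < t := by
    have := Real.log_two_gt_d9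
    rw [ht_def]; linarith
  have ht : 0 < t := by linarith
  have hn1 : (1:ℝ) < n := by exact_mod_cast hn
  have hlog_n : 0 < Real.log n := Real.log_pos hn1
  have hlogb : 1 ≤ Real.logb 2 n := by
    have : Real.logb 2 2 ≤ Real.logb 2 n :=
      Real.logb_le_logb_of_le (by norm_num) (by norm_num) (by exact_mod_cast hn)
    simpa using this
  have hlogb_pos : 0 < Real.logb 2 n := lt_of_lt_of_le one_pos hlogb
  have hL2 : 0 ≤ Real.log (Real.logb 2 n) := Real.log_nonneg hlogb
  set L : ℝ := ℓ * Real.log n + Real.log (Real.logb 2 n) with hL_def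
  have hL : 0 < L := add_pos_of_pos_of_nonneg (mul_pos hℓ hlog_n) hL2
  have hcR : (c:ℝ) = 6 * L * 2 ^ i := by rw [hc, hL_def]; ring
  have hcpos : (0:ℝ) < c := by rw [hcR]; positivity
  have hc0 : c ≠ 0 := by
    intro h; rw [h] at hcpos; norm_num at hcpos
  set a : ℝ := (2:ℝ) ^ (-(i:ℝ)) with ha_def
  have ha_pos : 0 < a := Real.rpow_pos_of_pos (by norm_num) _
  have hca : (c:ℝ) * a = 6 * L := by
    rw [hcR, ha_def, mul_assoc]
    rw [← Real.rpow_natCast (2:ℝ) i, ← Real.rpow_add (by norm_num)]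
    simp
  -- μ bounds
  have hμ0 : 0 ≤ μ := by
    have a0 : Fin c := ⟨0, Nat.pos_of_ne_zero hc0⟩
    rw [← hmean a0]
    exact integral_nonneg fun ω => (hbound a0 ω).1
  have hij' : i + 1 ≤ j := by omega
  have hμa : μ ≤ a / 2 := by
    have h1 : (2:ℝ) ^ (-(j:ℝ)) ≤ (2:ℝ) ^ (-((i:ℝ) + 1)) := by
      apply Real.rpow_le_rpow_of_exponent_le (by norm_num)
      have : (i:ℝ) + 1 ≤ (j:ℝ) := by exact_mod_cast hij'
      linarith
    have h2 : (2:ℝ) ^ (-((i:ℝ) + 1)) = a / 2 := by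
      rw [ha_def, neg_add, Real.rpow_add (by norm_num : (0:ℝ) < 2)]
      rw [Real.rpow_neg_one]
      ring
    calc μ ≤ (2:ℝ) ^ (-(j:ℝ)) := hμ
      _ ≤ _ := h1
      _ = a / 2 := h2
  -- integrability
  have hint : ∀ b : Fin c, Integrable (fun ω => Real.exp (t * X b ω)) ℙ := by
    intro b
    refine (integrable_const (Real.exp t)).mono'
      (((hmeas b).const_mul t).exp.aestronglyMeasurable) ?_
    filter_upwards with ω
    rw [Real.norm_eq_abs, abs_of_pos (Real.exp_pos _), Real.exp_le_exp]
    have := (hbound b ω).2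
    nlinarith [ (hbound b ω).1 ]
  -- mgf bound for a single variable
  have hmgf_one : ∀ b : Fin c, mgf (X b) ℙ t ≤ Real.exp μ := by
    intro b
    have hpt : ∀ ω, Real.exp (t * X b ω) ≤ 1 + (Real.exp t - 1) * X b ω := by
      intro ω
      obtain ⟨hx0, hx1⟩ := hbound b ω
      set x := X b ω
      have hconv := convexOn_exp.2 (Set.mem_univ (0:ℝ)) (Set.mem_univ t)
        (by linarith : (0:ℝ) ≤ 1 - x) hx0 (by ring)
      simp only [smul_eq_mul, mul_zero, zero_add, Real.exp_zero] at hconv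
      calc Real.exp (t * x) = Real.exp (x * t) := by ring_nf
        _ ≤ (1 - x) * 1 + x * Real.exp t := hconv
        _ = 1 + (Real.exp t - 1) * x := by ring
    have hXint : Integrable (X b) ℙ := by
      refine (integrable_const (1:ℝ)).mono' (hmeas b).aestronglyMeasurable ?_
      filter_upwards with ω
      rw [Real.norm_eq_abs, abs_of_nonneg (hbound b ω).1]
      exact (hbound b ω).2
    have hmono : mgf (X b) ℙ t ≤ ∫ ω, (1 + (Real.exp t - 1) * X b ω) ∂ℙ := by
      apply integral_mono (hint b) ?_ hpt
      exact (integrable_const 1).add (hXint.const_mul _)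
    have hval : ∫ ω, (1 + (Real.exp t - 1) * X b ω) ∂ℙ = 1 + (Real.exp t - 1) * μ := by
      rw [integral_add (integrable_const 1) (hXint.const_mul _),
        integral_const, integral_const_mul, hmean b]
      simp
    have hexp2 : Real.exp t = 2 := by rw [ht_def, Real.exp_log]; norm_num
    calc mgf (X b) ℙ t ≤ 1 + (Real.exp t - 1) * μ := hmono.trans_eq hval
      _ = μ + 1 := by rw [hexp2]; ring
      _ ≤ Real.exp μ := Real.add_one_le_exp μ
  -- mgf of the sum
  have hS_mgf : mgf (∑ b, X b) ℙ t ≤ Real.exp ((c:ℝ) * μ) := by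
    rw [hindep.mgf_sum hmeas]
    calc ∏ b, mgf (X b) ℙ t ≤ ∏ _b : Fin c, Real.exp μ :=
          Finset.prod_le_prod (fun b _ => mgf_nonneg) (fun b _ => hmgf_one b)
      _ = Real.exp μ ^ c := by simp
      _ = Real.exp ((c:ℝ) * μ) := by rw [← Real.exp_nat_mul]
  -- Chernoff
  have hchern := measure_ge_le_exp_mul_mgf (μ := ℙ) (X := ∑ b, X b) ((c:ℝ) * a) ht.le
    (hindep.integrable_exp_mul_sum hmeas (fun b _ => hint b))
  have hsub : {ω | a < (∑ b, X b ω) / c} ⊆ {ω | (c:ℝ) * a ≤ (∑ b, X b) ω} := by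
    intro ω hω
    simp only [Set.mem_setOf_eq] at hω ⊢
    rw [Finset.sum_apply]
    rw [lt_div_iff₀ hcpos] at hω
    linarith
  have hmono : (ℙ {ω | a < (∑ b, X b ω) / c}).toReal
      ≤ (ℙ {ω | (c:ℝ) * a ≤ (∑ b, X b) ω}).toReal :=
    ENNReal.toReal_mono (measure_ne_top _ _) (measure_mono hsub)
  have hrhs : 1 / ((n:ℝ) ^ ℓ * Real.logb 2 n) = Real.exp (-L) := by
    rw [hL_def, neg_add, Real.exp_add, Real.exp_neg, Real.exp_neg,
      Real.exp_log hlogb_pos,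
      Real.rpow_def_of_pos (by linarith : (0:ℝ) < n)]
    rw [one_div, mul_inv, mul_comm ℓ _]
  rw [hrhs]
  calc (ℙ {ω | a < (∑ b, X b ω) / c}).toReal
      ≤ Real.exp (-t * ((c:ℝ) * a)) * mgf (∑ b, X b) ℙ t := hmono.trans hchern
    _ ≤ Real.exp (-t * ((c:ℝ) * a)) * Real.exp ((c:ℝ) * μ) := by
        exact mul_le_mul_of_nonneg_left hS_mgf (Real.exp_pos _).le
    _ = Real.exp ((c:ℝ) * μ - t * ((c:ℝ) * a)) := by
        rw [← Real.exp_add]; ring_nf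
    _ ≤ Real.exp ((c:ℝ) * (a / 2) - t * (6 * L)) := by
        rw [Real.exp_le_exp, hca]
        have : (c:ℝ) * μ ≤ (c:ℝ) * (a / 2) :=
          mul_le_mul_of_nonneg_left hμa hcpos.le
        linarith
    _ < Real.exp (-L) := by
        rw [Real.exp_lt_exp]
        have : (c:ℝ) * (a / 2) = 3 * L := by
          rw [mul_div_assoc', hca]; ring
        rw [this]
        nlinarith
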